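/- Let q be a prime power, n a positive integer, and a, b elements of F_q. Let k be a divisor of q^n − 1 and let p_1, …, p_s (s ≥ 0) be the distinct primes that divide q^n − 1 but do not divide k. Write N = N_{q^n − 1}(a,b). Then N ≥ Σ_{i=1}^{s} N_{k·p_i}(a,b) − (s − 1)·N_k(a,b). -/
import Mathlib


/-- A nonzero element `ξ` is `e`-free if the only divisor `d` of `e` for which
`ξ = β ^ d` is solvable is `d = 1`. -/
def IsFree {E : Type*} [Monoid E] (e : ℕ) (ξ : E) : Prop :=
  ∀ d : ℕ, d ∣ e → (∃ β : E, β ^ d = ξ) → d = 1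

/-- `Ncount F E a b e` is the number of nonzero `ξ ∈ E` with `Tr ξ = a`,
`Tr ξ⁻¹ = b` and `ξ + ξ⁻¹` being `e`-free. -/
noncomputable def Ncount (F E : Type*) [Field F] [Field E] [Algebra F E]
    (a b : F) (e : ℕ) : ℕ :=
  Nat.card {ξ : E // ξ ≠ 0 ∧ Algebra.trace F E ξ = a ∧ Algebra.trace F E ξ⁻¹ = b ∧
    IsFree e (ξ + ξ⁻¹)}

lemma isFree_mono {E : Type*} [Monoid E] {e e' : ℕ} (h : e' ∣ e) {ξ : E}
    (hf : IsFree e ξ) : IsFree e' ξ := fun d hd hex => hf d (hd.trans h) hex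

lemma isFree_of_primes {E : Type*} [Monoid E] {m k : ℕ} (hm : m ≠ 0) {ξ : E}
    (hk : IsFree k ξ)
    (hp : ∀ p, p.Prime → p ∣ m → ¬ p ∣ k → IsFree (k * p) ξ) :
    IsFree m ξ := by
  intro d hd hex
  by_contra hd1
  obtain ⟨ℓ, hℓp, hℓd⟩ := Nat.exists_prime_and_dvd hd1
  obtain ⟨β, hβ⟩ := hex
  obtain ⟨c, rfl⟩ := hℓd
  have hex' : ∃ γ : E, γ ^ ℓ = ξ := ⟨β ^ c, by rw [← pow_mul, mul_comm]; exact hβ⟩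
  by_cases hℓk : ℓ ∣ k
  · exact hℓp.one_lt.ne' (hk ℓ hℓk hex')
  · exact hℓp.one_lt.ne'
      (hp ℓ hℓp ((Dvd.intro c rfl).trans hd) hℓk ℓ ⟨k, mul_comm k ℓ⟩ hex')

theorem stmt5 (q n : ℕ) (hq : IsPrimePow q) (hn : 0 < n)
    (F E : Type*) [Field F] [Fintype F] [Field E] [Fintype E] [Algebra F E]
    (hF : Fintype.card F = q) (hE : Fintype.card E = q ^ n)
    (a b : F) (k : ℕ) (hk : k ∣ q ^ n - 1)
    (ps : Finset ℕ) (hps : ps = (q ^ n - 1).primeFactors.filter fun p => ¬ p ∣ k) :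
    (Ncount F E a b (q ^ n - 1) : ℝ) ≥
      (∑ p ∈ ps, (Ncount F E a b (k * p) : ℝ)) -
        ((ps.card : ℝ) - 1) * (Ncount F E a b k : ℝ) := by
  classical
  set m := q ^ n - 1 with hm_def
  have hq2 : 2 ≤ q ^ n := le_trans hq.two_le (Nat.le_self_pow hn.ne' q)
  have hm : m ≠ 0 := by omega
  -- base predicate and indicator
  set Q : ℕ → E → Prop := fun e ξ =>
    ξ ≠ 0 ∧ Algebra.trace F E ξ = a ∧ Algebra.trace F E ξ⁻¹ = b ∧ IsFree e (ξ + ξ⁻¹)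
    with hQ_def
  set I : ℕ → E → ℝ := fun e ξ => if Q e ξ then 1 else 0 with hI_def
  have hIcount : ∀ e, (Ncount F E a b e : ℝ) = ∑ ξ : E, I e ξ := by
    intro e
    have : Ncount F E a b e = (Finset.univ.filter (Q e)).card := by
      rw [Ncount, Nat.card_eq_fintype_card, Fintype.card_subtype]
    rw [this, Finset.card_filter]
    push_cast
    rfl
  have hIpos : ∀ e (ξ : E), Q e ξ → I e ξ = 1 := fun e ξ h => if_pos h
  have hIneg : ∀ e (ξ : E), ¬ Q e ξ → I e ξ = 0 := fun e ξ h => if_neg h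
  have hI01 : ∀ e ξ, 0 ≤ I e ξ ∧ I e ξ ≤ 1 := by
    intro e ξ
    by_cases h : Q e ξ
    · rw [hIpos e ξ h]; norm_num
    · rw [hIneg e ξ h]; norm_num
  rw [hIcount, hIcount, Finset.sum_congr rfl (fun p _ => hIcount (k * p)),
    Finset.sum_comm, Finset.mul_sum, ← Finset.sum_sub_distrib]
  apply Finset.sum_le_sum
  intro ξ _
  -- pointwise inequality
  by_cases hQk : Q k ξ
  · have hIk : I k ξ = 1 := hIpos k ξ hQk
    by_cases hall : ∀ p ∈ ps, Q (k * p) ξ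
    · have hfull : Q m ξ := by
        refine ⟨hQk.1, hQk.2.1, hQk.2.2.1, isFree_of_primes hm hQk.2.2.2 ?_⟩
        intro p hp hpm hpk
        have hpps : p ∈ ps := by
          rw [hps]; simp [Nat.mem_primeFactors, hp, hpm, hm, hpk]
        exact (hall p hpps).2.2.2
      have h1 : ∑ p ∈ ps, I (k * p) ξ = (ps.card : ℝ) := by
        rw [Finset.sum_congr rfl (fun p hp => if_pos (hall p hp)),
          Finset.sum_const, nsmul_eq_mul, mul_one]
      rw [h1, hIpos m ξ hfull, hIk]
      ring_nf
      linarith [le_refl (1:ℝ)]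
    · push_neg at hall
      obtain ⟨p₀, hp₀, hp₀Q⟩ := hall
      have hcard1 : 1 ≤ ps.card := Finset.card_pos.mpr ⟨p₀, hp₀⟩
      have hsum : ∑ p ∈ ps, I (k * p) ξ ≤ (ps.card : ℝ) - 1 := by
        rw [← Finset.add_sum_erase ps _ hp₀, hIneg _ ξ hp₀Q, zero_add]
        calc ∑ p ∈ ps.erase p₀, I (k * p) ξ
            ≤ ∑ _p ∈ ps.erase p₀, (1 : ℝ) :=
              Finset.sum_le_sum fun p _ => (hI01 (k * p) ξ).2
          _ = ((ps.erase p₀).card : ℝ) := by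
              rw [Finset.sum_const, nsmul_eq_mul, mul_one]
          _ = (ps.card : ℝ) - 1 := by
              rw [Finset.card_erase_of_mem hp₀, Nat.cast_sub hcard1, Nat.cast_one]
      have := (hI01 m ξ).1
      rw [hIk]
      linarith
  · have hIk : I k ξ = 0 := hIneg k ξ hQk
    have hsum : ∑ p ∈ ps, I (k * p) ξ = 0 := by
      apply Finset.sum_eq_zero
      intro p _
      apply hIneg
      intro hQkp
      exact hQk ⟨hQkp.1, hQkp.2.1, hQkp.2.2.1,
        isFree_mono ⟨p, rfl⟩ hQkp.2.2.2⟩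
    have := (hI01 m ξ).1
    rw [hIk, hsum]
    linarith
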